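/- Reduction of a cumulative matrix to a spectral matrix: given a cumulative matrix M (m_{ij}=0 for i≥j, m_{ij} ≤ m_{i,j+1}) and b ∈ ℕ, define s_{0j} := m_{0j} and, for i>0, s_{ij} := min{(m_{0j} ∸ b), min_{1≤k≤i} m_{kj}}. Then S = [s_{ij}] is a spectral matrix for b and the induced min-plus services agree: for all q ∈ U↑b and j, min_i(q_i + s_{ij}) = min_i(q_i + m_{ij}). -/

import Mathlib

/-- A cumulative vector: a nondecreasing sequence `ℕ → ℕ∞` starting at `0`. -/
def Cumulative (x : ℕ → ℕ∞) : Prop := x 0 = 0 ∧ Monotone x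

/-- `U↑b`: cumulative vectors whose first entry is at least `b`. -/
def UUp (b : ℕ) : Set (ℕ → ℕ∞) := {x | Cumulative x ∧ (b : ℕ∞) ≤ x 1}

/-- A cumulative matrix: strictly upper triangular with nondecreasing rows. -/
def CumulativeMatrix (m : ℕ → ℕ → ℕ∞) : Prop :=
  (∀ i j, j ≤ i → m i j = 0) ∧ (∀ i j, m i j ≤ m i (j + 1))

/-- A spectral matrix for backlog `b`. -/
def SpectralMatrix (b : ℕ) (s : ℕ → ℕ → ℕ∞) : Prop :=
  (∀ i j, j ≤ i → s i j = 0) ∧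
  (∀ i j, s i j ≤ s i (j + 1)) ∧
  (∀ i j, s (i + 1) j ≤ s i j) ∧
  (∀ i j, 0 < i → s i j ≤ s 0 j - (b : ℕ∞))

/-- The reduction of a cumulative matrix `m` to a spectral matrix for `b`. -/
noncomputable def reduceMat (b : ℕ) (m : ℕ → ℕ → ℕ∞) (i j : ℕ) : ℕ∞ :=
  if i = 0 then m 0 j
  else min (m 0 j - (b : ℕ∞)) (⨅ k ∈ Finset.Icc 1 i, m k j)

/-- Reducing a cumulative matrix yields a spectral matrix inducing the same
min-plus service on `U↑b`. -/
theorem reduce_cumulative_matrix (b : ℕ) (m : ℕ → ℕ → ℕ∞)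
    (hm : CumulativeMatrix m) :
    SpectralMatrix b (reduceMat b m) ∧
    ∀ q ∈ UUp b, ∀ j : ℕ,
      (⨅ i : ℕ, (q i + reduceMat b m i j)) = ⨅ i : ℕ, (q i + m i j) := by
  obtain ⟨hz, hmono⟩ := hm
  have hle : ∀ i j, reduceMat b m i j ≤ m i j := by
    intro i j
    unfold reduceMat
    rcases Nat.eq_zero_or_pos i with h | h
    · simp [h]
    · rw [if_neg h.ne']
      exact (min_le_right _ _).trans (iInf₂_le i (Finset.mem_Icc.mpr ⟨h, le_rfl⟩))
  constructor
  · refine ⟨?_, ?_, ?_, ?_⟩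
    · intro i j hji
      exact le_antisymm ((hle i j).trans_eq (hz i j hji)) zero_le
    · intro i j
      unfold reduceMat
      rcases Nat.eq_zero_or_pos i with h | h
      · simp [h, hmono 0 j]
      · rw [if_neg h.ne', if_neg h.ne']
        refine min_le_min (tsub_le_tsub_right (hmono 0 j) _) ?_
        exact le_iInf₂ fun k hk => (iInf₂_le k hk).trans (hmono k j)
    · intro i j
      unfold reduceMat
      rcases Nat.eq_zero_or_pos i with h | h
      · subst h
        simp only [if_neg (Nat.one_ne_zero), if_pos rfl]
        exact (min_le_left _ _).trans (tsub_le_self)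
      · rw [if_neg h.ne', if_neg (Nat.succ_ne_zero i)]
        refine min_le_min le_rfl ?_
        exact le_iInf₂ fun k hk =>
          iInf₂_le k (Finset.Icc_subset_Icc_right (Nat.le_succ i) hk)
    · intro i j hi
      unfold reduceMat
      rw [if_neg hi.ne', if_pos rfl]
      exact min_le_left _ _
  · rintro q ⟨⟨hq0, hqmono⟩, hqb⟩ j
    refine le_antisymm (iInf_mono fun i => add_le_add le_rfl (hle i j)) ?_
    refine le_iInf fun i => ?_
    rcases Nat.eq_zero_or_pos i with h | h
    · subst h
      simpa [reduceMat] using iInf_le (fun i => q i + m i j) 0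
    · have hqi : (b : ℕ∞) ≤ q i := hqb.trans (hqmono h)
      rw [reduceMat, if_neg h.ne']
      rcases min_cases (m 0 j - (b : ℕ∞)) (⨅ k ∈ Finset.Icc 1 i, m k j) with
        ⟨heq, _⟩ | ⟨heq, _⟩
      · rw [heq]
        calc ⨅ i' : ℕ, (q i' + m i' j) ≤ q 0 + m 0 j := iInf_le _ 0
          _ = m 0 j := by rw [hq0, zero_add]
          _ ≤ (b : ℕ∞) + (m 0 j - b) := le_add_tsub
          _ ≤ q i + (m 0 j - b) := add_le_add_left hqi _
      · rw [heq]
        have hne : (Finset.Icc 1 i).Nonempty := ⟨1, Finset.mem_Icc.mpr ⟨le_rfl, h⟩⟩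
        obtain ⟨k, hk, hkeq⟩ := Finset.exists_mem_eq_inf (Finset.Icc 1 i)
          hne (fun k => m k j)
        rw [← Finset.inf_eq_iInf, hkeq]
        calc ⨅ i' : ℕ, (q i' + m i' j) ≤ q k + m k j := iInf_le _ k
          _ ≤ q i + m k j :=
            add_le_add_left (hqmono (Finset.mem_Icc.mp hk).2) _
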